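/- With ψ defined on monomial quasi-symmetric functions by ψ(M_β) = M_{β⁺} + 2M_{β·1}, the peak functions satisfy ψ(θ_α) = θ_{α⁺} for every peak composition α. -/

import Mathlib

open scoped Classical

noncomputable section

/-- The monomial quasi-symmetric function `M_α`. -/
def Mqs (α : List ℕ) : MvPowerSeries ℕ ℚ :=
  fun d => if (d.support.sort (· ≤ ·)).map (fun i => d i) = α then 1 else 0

/-- `RefinesL fine coarse` : the composition `fine` refines `coarse`. -/
def RefinesL (fine coarse : List ℕ) : Prop :=
  ∃ L : List (List ℕ), [] ∉ L ∧ L.map List.sum = coarse ∧ L.flatten = fine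

/-- `β*`: replace every part `β_i > 1` of `β` other than the first by the pair `(1, β_i − 1)`. -/
def starC : List ℕ → List ℕ
  | [] => []
  | a :: rest => a :: rest.flatMap (fun b => if 1 < b then [1, b - 1] else [b])

/-- The shifted quasi-symmetric function `θ_α = ∑_{β ⊨ m, β* ≼ α} 2^{k(β)} M_β`. -/
def θqs (α : List ℕ) : MvPowerSeries ℕ ℚ :=
  ∑ β : Composition α.sum,
    if RefinesL (starC β.blocks) α then ((2 : ℚ) ^ β.length) • Mqs β.blocks else 0

/-- `β⁺`: increase the last part of `β` by `1`. -/
def plusOne (β : List ℕ) : List ℕ := β.dropLast ++ [β.getLast! + 1]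

theorem getLast!_concat' (l : List ℕ) (a : ℕ) : (l ++ [a]).getLast! = a :=
  List.getLast!_of_getLast? (by simp)

theorem concat_getLast! (l : List ℕ) (h : l ≠ []) : l.dropLast ++ [l.getLast!] = l := by
  have := List.dropLast_concat_getLast h
  rwa [List.getLast!_of_getLast? (List.getLast?_eq_getLast h)]

theorem getLast!_append' (x l : List ℕ) (h : l ≠ []) : (x ++ l).getLast! = l.getLast! := by
  rw [List.getLast!_of_getLast? (by rw [List.getLast?_append_of_ne_nil _ h]; exact List.getLast?_eq_getLast h)]
  exact (List.getLast!_of_getLast? (List.getLast?_eq_getLast h)).symm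

theorem concat_inj' {x y : List ℕ} {a b : ℕ} (h : x ++ [a] = y ++ [b]) : x = y ∧ a = b := by
  have := List.concat_inj.mp (by simpa [List.concat] using h)
  simpa using this

theorem plusOne_concat (l : List ℕ) (a : ℕ) : plusOne (l ++ [a]) = l ++ [a + 1] := by
  simp [plusOne, getLast!_concat']

theorem exists_concat_of_refines {f c : List ℕ} (hc : c ≠ []) (h : RefinesL f c) :
    ∃ (L0 : List (List ℕ)) (B : List ℕ), B ≠ [] ∧ [] ∉ L0 ∧
      (L0.map List.sum) ++ [B.sum] = c ∧ L0.flatten ++ B = f := by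
  obtain ⟨L, hne, hsum, hflat⟩ := h
  rcases L.eq_nil_or_concat with rfl | ⟨L0, B, rfl⟩
  · exact absurd hsum.symm hc
  · refine ⟨L0, B, fun h' => hne (by simp [h']), fun h' => hne (by simp [h']), ?_, ?_⟩
    · simpa using hsum
    · simpa using hflat

theorem refines_of_concat {f c : List ℕ} {L0 : List (List ℕ)} {B : List ℕ}
    (hB : B ≠ []) (hL0 : [] ∉ L0) (hsum : (L0.map List.sum) ++ [B.sum] = c)
    (hflat : L0.flatten ++ B = f) : RefinesL f c := by
  refine ⟨L0 ++ [B], ?_, by simpa using hsum, by simpa using hflat⟩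
  intro h'
  rcases List.mem_append.mp h' with h1 | h1
  · exact hL0 h1
  · simp at h1; exact hB h1

/-- L1 -/

theorem refines_append_one_iff {f c : List ℕ} (hc : c ≠ []) (hcl : 0 < c.getLast!) :
    RefinesL (f ++ [1]) (plusOne c) ↔ RefinesL f c := by
  constructor
  · rintro h
    obtain ⟨L0, B, hB, hL0, hsum, hflat⟩ := exists_concat_of_refines (by simp [plusOne]) h
    have hBlast : B.getLast! = 1 := by
      have := getLast!_append' L0.flatten B hB
      rw [hflat, getLast!_concat'] at this; exact this.symm
    have hBsplit : B.dropLast ++ [1] = B := by rw [← hBlast]; exact concat_getLast! B hB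
    rw [← concat_getLast! c hc, plusOne_concat] at hsum
    obtain ⟨hs1, hs2⟩ := concat_inj' hsum
    have hBsum : B.dropLast.sum + 1 = c.getLast! + 1 := by
      rw [← hs2]
      conv_rhs => rw [← hBsplit]
      simp
    have hBd : B.dropLast ≠ [] := by
      intro h'
      rw [h'] at hBsum
      simp only [List.sum_nil, zero_add] at hBsum
      omega
    refine refines_of_concat hBd hL0 ?_ ?_
    · rw [hs1]
      have h2 : B.dropLast.sum = c.getLast! := by omega
      rw [h2, concat_getLast! c hc]
    · have h3 : L0.flatten ++ B.dropLast ++ [1] = f ++ [1] := by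
        rw [List.append_assoc, hBsplit, hflat]
      exact (concat_inj' h3).1
  · rintro h
    obtain ⟨L0, B, hB, hL0, hsum, hflat⟩ := exists_concat_of_refines hc h
    rw [← concat_getLast! c hc] at hsum
    obtain ⟨hs1, hs2⟩ := concat_inj' hsum
    refine refines_of_concat (B := B ++ [1]) (by simp) hL0 ?_ ?_
    · rw [← concat_getLast! c hc, plusOne_concat]
      simp [hs1, hs2]
    · rw [← hflat]; simp

/-- L2 -/

theorem refines_plusOne_iff {f c : List ℕ} (hf : f ≠ []) (hc : c ≠ []) :
    RefinesL (plusOne f) (plusOne c) ↔ RefinesL f c := by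
  constructor
  · rintro h
    obtain ⟨L0, B, hB, hL0, hsum, hflat⟩ := exists_concat_of_refines (by simp [plusOne]) h
    have hBlast : B.getLast! = f.getLast! + 1 := by
      have h1 := getLast!_append' L0.flatten B hB
      rw [hflat] at h1
      rw [← h1, plusOne, getLast!_concat']
    have hBsplit : B.dropLast ++ [f.getLast! + 1] = B := by
      rw [← hBlast]; exact concat_getLast! B hB
    rw [← concat_getLast! c hc, plusOne_concat] at hsum
    obtain ⟨hs1, hs2⟩ := concat_inj' hsum
    have hBs : B.dropLast.sum + (f.getLast! + 1) = B.sum := by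
      conv_rhs => rw [← hBsplit]
      simp
    refine refines_of_concat (B := B.dropLast ++ [f.getLast!]) (by simp) hL0 ?_ ?_
    · have h2 : (B.dropLast ++ [f.getLast!]).sum = c.getLast! := by simp only [List.sum_append, List.sum_cons, List.sum_nil, add_zero]; omega
      rw [← concat_getLast! c hc, hs1, h2]
    · have h3 : L0.flatten ++ B.dropLast ++ [f.getLast! + 1] = f.dropLast ++ [f.getLast! + 1] := by
        rw [List.append_assoc, hBsplit, hflat, plusOne]
      rw [← List.append_assoc, (concat_inj' h3).1, concat_getLast! f hf]
  · rintro h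
    obtain ⟨L0, B, hB, hL0, hsum, hflat⟩ := exists_concat_of_refines hc h
    rw [← concat_getLast! c hc] at hsum
    obtain ⟨hs1, hs2⟩ := concat_inj' hsum
    have hfB : f.getLast! = B.getLast! := by
      rw [← hflat]; exact getLast!_append' _ _ hB
    refine refines_of_concat (B := B.dropLast ++ [B.getLast! + 1]) (by simp) hL0 ?_ ?_
    · have hBs : B.dropLast.sum + B.getLast! = B.sum := by
        conv_rhs => rw [← concat_getLast! B hB]
        simp
      have h2 : (B.dropLast ++ [B.getLast! + 1]).sum = c.getLast! + 1 := by simp only [List.sum_append, List.sum_cons, List.sum_nil, add_zero]; omega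
      rw [← concat_getLast! c hc, plusOne_concat, hs1, h2]
    · rw [plusOne, ← hflat, List.dropLast_append_of_ne_nil hB,
        getLast!_append' _ _ hB, ← List.append_assoc]

theorem starC_concat (a : ℕ) (r : List ℕ) (k : ℕ) :
    starC ((a :: r) ++ [k]) = starC (a :: r) ++ (if 1 < k then [1, k - 1] else [k]) := by
  simp [starC]

theorem sum_plusOne (l : List ℕ) (h : l ≠ []) : (plusOne l).sum = l.sum + 1 := by
  conv_rhs => rw [← concat_getLast! l h]
  simp [plusOne]
  omega

theorem length_plusOne (l : List ℕ) (h : l ≠ []) : (plusOne l).length = l.length := by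
  conv_rhs => rw [← concat_getLast! l h]
  simp [plusOne]

theorem getLast!_pos (l : List ℕ) (h : l ≠ []) (hp : ∀ p ∈ l, 0 < p) : 0 < l.getLast! := by
  rw [List.getLast!_of_getLast? (List.getLast?_eq_getLast h)]
  exact hp _ (List.getLast_mem h)

noncomputable def compEquiv (m : ℕ) (hm : 0 < m) :
    Composition m ⊕ Composition m ≃ Composition (m + 1) where
  toFun s :=
    match s with
    | .inl β => ⟨plusOne β.blocks,
        by
          intro i hi
          have hb : β.blocks ≠ [] := by
            intro h'
            have := β.blocks_sum; rw [h'] at this; simp at this; omega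
          rw [plusOne] at hi
          rcases List.mem_append.mp hi with h1 | h1
          · exact β.blocks_pos (List.dropLast_subset _ h1)
          · simp at h1; omega,
        by
          have hb : β.blocks ≠ [] := by
            intro h'
            have := β.blocks_sum; rw [h'] at this; simp at this; omega
          rw [sum_plusOne _ hb, β.blocks_sum]⟩
    | .inr β => ⟨β.blocks ++ [1],
        by
          intro i hi
          rcases List.mem_append.mp hi with h1 | h1
          · exact β.blocks_pos h1
          · simp at h1; omega,
        by simp [β.blocks_sum]⟩
  invFun γ :=
    if h1 : γ.blocks.getLast! = 1 then
      .inr ⟨γ.blocks.dropLast,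
        fun hi => γ.blocks_pos (List.dropLast_subset _ hi),
        by
          have hb : γ.blocks ≠ [] := by
            intro h'; have := γ.blocks_sum; rw [h'] at this; simp at this
          have := γ.blocks_sum
          conv_lhs at this => rw [← concat_getLast! _ hb]
          rw [List.sum_append] at this
          simp only [h1, List.sum_cons, List.sum_nil, add_zero] at this
          omega⟩
    else
      .inl ⟨γ.blocks.dropLast ++ [γ.blocks.getLast! - 1],
        by
          intro i hi
          have hb : γ.blocks ≠ [] := by
            intro h'; have := γ.blocks_sum; rw [h'] at this; simp at this
          have hgl : 0 < γ.blocks.getLast! := getLast!_pos _ hb (fun p hp => γ.blocks_pos hp)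
          rcases List.mem_append.mp hi with h2 | h2
          · exact γ.blocks_pos (List.dropLast_subset _ h2)
          · simp only [List.mem_singleton] at h2; omega,
        by
          have hb : γ.blocks ≠ [] := by
            intro h'; have := γ.blocks_sum; rw [h'] at this; simp at this
          have hgl : 0 < γ.blocks.getLast! := getLast!_pos _ hb (fun p hp => γ.blocks_pos hp)
          have := γ.blocks_sum
          conv_lhs at this => rw [← concat_getLast! _ hb]
          rw [List.sum_append] at this
          simp only [List.sum_append, List.sum_cons, List.sum_nil, add_zero] at this ⊢
          omega⟩
  left_inv s := by
    rcases s with β | β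
    · have hb : β.blocks ≠ [] := by
        intro h'
        have := β.blocks_sum; rw [h'] at this; simp at this; omega
      have hgl : 0 < β.blocks.getLast! := getLast!_pos _ hb (fun p hp => β.blocks_pos hp)
      simp only []
      rw [dif_neg, Sum.inl.injEq]
      · ext1
        simp only [plusOne, getLast!_concat', List.dropLast_concat]
        have : β.blocks.getLast! + 1 - 1 = β.blocks.getLast! := by omega
        rw [this, concat_getLast! _ hb]
      · simp only [plusOne, getLast!_concat']
        omega
    · simp only []
      rw [dif_pos (by simp [getLast!_concat']), Sum.inr.injEq]
      ext1
      simp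
  right_inv γ := by
    have hb : γ.blocks ≠ [] := by
      intro h'; have := γ.blocks_sum; rw [h'] at this; simp at this
    have hgl : 0 < γ.blocks.getLast! := getLast!_pos _ hb (fun p hp => γ.blocks_pos hp)
    dsimp only
    by_cases h1 : γ.blocks.getLast! = 1
    · rw [dif_pos h1]
      ext1
      have := concat_getLast! _ hb
      rwa [h1] at this
    · rw [dif_neg h1]
      ext1
      simp only [plusOne, getLast!_concat', List.dropLast_concat]
      have : γ.blocks.getLast! - 1 + 1 = γ.blocks.getLast! := by omega
      rw [this, concat_getLast! _ hb]

theorem starC_ne_nil (a : ℕ) (r : List ℕ) : starC (a :: r) ≠ [] := by simp [starC]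

theorem plusOne_single (k : ℕ) : plusOne [k] = [k + 1] := by
  have : [k] = [] ++ [k] := rfl
  rw [this, plusOne_concat, List.nil_append]

/-- key lemma 1 -/

theorem key1 {b c : List ℕ} (hb : b ≠ []) (hbp : ∀ x ∈ b, 0 < x)
    (hc : c ≠ []) (hcl : 0 < c.getLast!) :
    RefinesL (starC (plusOne b)) (plusOne c) ↔ RefinesL (starC b) c := by
  rcases b.eq_nil_or_concat with rfl | ⟨b0, k, rfl⟩
  · exact absurd rfl hb
  simp only [List.concat_eq_append] at hbp ⊢
  have hk : 0 < k := hbp k (by simp)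
  rcases b0 with _ | ⟨a, r⟩
  · -- single block [k]
    simp only [List.nil_append]
    rw [plusOne_single, show starC [k + 1] = [k + 1] from rfl, show starC [k] = [k] from rfl,
      ← plusOne_single]
    exact refines_plusOne_iff (by simp) hc
  · by_cases hk1 : k = 1
    · subst hk1
      rw [plusOne_concat, starC_concat, starC_concat]
      norm_num
      rw [show starC (a :: r) ++ [1, 1] = (starC (a :: r) ++ [1]) ++ [1] by simp]
      exact refines_append_one_iff hc hcl
    · have hk2 : 1 < k := by omega
      rw [plusOne_concat, starC_concat, starC_concat, if_pos hk2, if_pos (by omega : 1 < k + 1)]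
      have hrw : starC (a :: r) ++ [1, k + 1 - 1] = plusOne (starC (a :: r) ++ [1, k - 1]) := by
        rw [show starC (a :: r) ++ [1, k - 1] = (starC (a :: r) ++ [1]) ++ [k - 1] by simp,
          plusOne_concat]
        simp
        omega
      rw [hrw]
      exact refines_plusOne_iff (by simp) hc

/-- key lemma 2 -/

theorem key2 {b c : List ℕ} (hb : b ≠ []) (hc : c ≠ []) (hcl : 0 < c.getLast!) :
    RefinesL (starC (b ++ [1])) (plusOne c) ↔ RefinesL (starC b) c := by
  rcases b with _ | ⟨a, r⟩
  · exact absurd rfl hb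
  rw [starC_concat]
  norm_num
  exact refines_append_one_iff hc hcl

/-- With `ψ` defined on monomial quasi-symmetric functions by
`ψ(M_β) = M_{β⁺} + 2 M_{β·1}`, the peak functions satisfy `ψ(θ_α) = θ_{α⁺}` for every
peak composition `α` (all parts `> 1` except possibly the last).  The left side `ψ(θ_α)`
is written out termwise from `θ_α = ∑_{β* ≼ α} 2^{k(β)} M_β`. -/
theorem stmt10 (α : List ℕ) (hα : α ≠ []) (hp : ∀ p ∈ α, 0 < p)
    (hpeak : ∀ i, i + 1 < α.length → 1 < α.getD i 0) :
    (∑ β : Composition α.sum,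
      if RefinesL (starC β.blocks) α then
        ((2 : ℚ) ^ β.length) • (Mqs (plusOne β.blocks) + (2 : ℚ) • Mqs (β.blocks ++ [1]))
      else 0)
      = θqs (plusOne α) := by
  have hm : 0 < α.sum := by
    rcases α with _ | ⟨a, t⟩
    · exact absurd rfl hα
    · have := hp a (by simp)
      simp only [List.sum_cons]
      omega
  have hcl : 0 < α.getLast! := getLast!_pos α hα hp
  have hsum1 : (plusOne α).sum = α.sum + 1 := sum_plusOne α hα
  unfold θqs
  rw [hsum1, ← Equiv.sum_comp (compEquiv α.sum hm), Fintype.sum_sum_type,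
    ← Finset.sum_add_distrib]
  refine Finset.sum_congr rfl fun β _ => ?_
  have hb : β.blocks ≠ [] := by
    intro h'
    have := β.blocks_sum
    rw [h'] at this
    simp at this
    omega
  have hbp : ∀ x ∈ β.blocks, 0 < x := fun x hx => β.blocks_pos hx
  have hA : ((compEquiv α.sum hm) (Sum.inl β)).blocks = plusOne β.blocks := rfl
  have hB : ((compEquiv α.sum hm) (Sum.inr β)).blocks = β.blocks ++ [1] := rfl
  have hAl : ((compEquiv α.sum hm) (Sum.inl β)).length = β.length := by
    show (plusOne β.blocks).length = β.blocks.length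
    exact length_plusOne _ hb
  have hBl : ((compEquiv α.sum hm) (Sum.inr β)).length = β.length + 1 := by
    show (β.blocks ++ [1]).length = β.blocks.length + 1
    simp
  rw [hA, hB, hAl, hBl]
  simp only [key1 hb hbp hα hcl, key2 hb hα hcl]
  by_cases hcond : RefinesL (starC β.blocks) α
  · rw [if_pos hcond, if_pos hcond, if_pos hcond, smul_add, pow_succ, mul_comm, mul_smul, smul_comm]
  · simp [hcond]

end
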